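/- Let {u_k} be any sequence in the group N of n×n real upper triangular unipotent matrices. Then there is a subsequence {u_{i_k}} of {u_k} and a factorization u_{i_k} = b_k v_k, where {b_k} is a bounded sequence in N and {v_k} is a sequence in N, v_k = (v_{ij}(k)), satisfying the following dichotomy: for each pair (i,j) with 1 ≤ i < j ≤ n, either v_{ij}(k) = 0 for all k, or v_{ij}(k) → ∞ as k → ∞. -/

import Mathlib

open Filter Topology

attribute [local instance] Matrix.frobeniusNormedAddCommGroup
attribute [local instance] Matrix.frobeniusNormedSpace

/-- `u` is an upper triangular unipotent matrix. -/
def IsUpperUnip {n : ℕ} (u : Matrix (Fin n) (Fin n) ℝ) : Prop :=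
  (∀ i : Fin n, u i i = 1) ∧ ∀ i j : Fin n, j < i → u i j = 0

lemma unip_one {n : ℕ} : IsUpperUnip (1 : Matrix (Fin n) (Fin n) ℝ) := by
  constructor
  · intro i; simp
  · intro i j h; exact Matrix.one_apply_ne (Fin.ne_of_gt h)

lemma unip_mul {n : ℕ} {A B : Matrix (Fin n) (Fin n) ℝ}
    (hA : IsUpperUnip A) (hB : IsUpperUnip B) : IsUpperUnip (A * B) := by
  constructor
  · intro i
    rw [Matrix.mul_apply]
    rw [Finset.sum_eq_single i]
    · rw [hA.1, hB.1, one_mul]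
    · intro l _ hl
      rcases lt_or_gt_of_ne hl with h | h
      · rw [hA.2 i l h, zero_mul]
      · rw [hB.2 l i h, mul_zero]
    · intro h; exact absurd (Finset.mem_univ i) h
  · intro i j hji
    rw [Matrix.mul_apply]
    apply Finset.sum_eq_zero
    intro l _
    rcases lt_or_ge l i with h | h
    · rw [hA.2 i l h, zero_mul]
    · rw [hB.2 l j (lt_of_lt_of_le hji h), mul_zero]

lemma unip_elem {n : ℕ} (i₀ j₀ : Fin n) (h : i₀ < j₀) (c : ℝ) :
    IsUpperUnip (1 + c • Matrix.single i₀ j₀ (1 : ℝ)) := by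
  constructor
  · intro i
    simp only [Matrix.add_apply, Matrix.smul_apply, Matrix.single, Matrix.of_apply]
    rw [Matrix.one_apply_eq]
    rw [if_neg, smul_zero, add_zero]
    rintro ⟨rfl, rfl⟩; exact lt_irrefl _ h
  · intro i j hji
    simp only [Matrix.add_apply, Matrix.smul_apply, Matrix.single, Matrix.of_apply]
    rw [Matrix.one_apply_ne (Fin.ne_of_gt hji)]
    rw [if_neg, smul_zero, add_zero]
    rintro ⟨rfl, rfl⟩; exact absurd h (not_lt_of_gt hji)

lemma extraction (s : ℕ → ℝ) : ∃ ψ : ℕ → ℕ, StrictMono ψ ∧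
    ((∃ C, ∀ k, |s (ψ k)| ≤ C) ∨ Tendsto (fun k => |s (ψ k)|) atTop atTop) := by
  by_cases hb : ∃ C, ∀ k, |s k| ≤ C
  · exact ⟨id, strictMono_id, Or.inl hb⟩
  · push_neg at hb
    have hfreq : ∀ m : ℕ, ∃ᶠ k in atTop, (m : ℝ) < |s k| := by
      intro m
      rw [Filter.frequently_atTop]
      intro N
      by_contra h'
      push_neg at h'
      obtain ⟨C, hC⟩ : ∃ C, ∀ k < N, |s k| ≤ C := by
        obtain ⟨C, hC⟩ := Set.Finite.bddAbove (Set.Finite.image (fun k => |s k|) (Set.finite_Iio N))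
        exact ⟨C, fun k hk => hC ⟨k, hk, rfl⟩⟩
      obtain ⟨k, hk⟩ := hb (max C m)
      rcases lt_or_ge k N with h1 | h1
      · exact absurd (le_max_of_le_left (hC k h1)) (not_le_of_gt hk)
      · exact absurd (le_max_of_le_right (h' k h1)) (not_le_of_gt hk)
    obtain ⟨ψ, hψ, hP⟩ := Filter.extraction_forall_of_frequently hfreq
    refine ⟨ψ, hψ, Or.inr ?_⟩
    apply tendsto_atTop_mono (fun k => le_of_lt (hP k))
    exact tendsto_natCast_atTop_atTop

lemma key_inj {n : ℕ} {i j i' j' : Fin n} (hij : i < j) (hij' : i' < j')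
    (h : ((j : ℕ) - i) * n + i = ((j' : ℕ) - i') * n + i') : i = i' ∧ j = j' := by
  have hi : (i : ℕ) < n := i.isLt
  have hi' : (i' : ℕ) < n := i'.isLt
  have hmod : (i : ℕ) = (i' : ℕ) := by
    have h2 := congrArg (· % n) h
    simp only [Nat.mul_add_mod'] at h2
    rwa [Nat.mod_eq_of_lt hi, Nat.mod_eq_of_lt hi'] at h2
  have hgap : ((j : ℕ) - i) = ((j' : ℕ) - i') := by
    have hn : 0 < n := lt_of_le_of_lt (Nat.zero_le _) hi
    have : ((j : ℕ) - i) * n = ((j' : ℕ) - i') * n := by omega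
    exact Nat.eq_of_mul_eq_mul_right hn this
  have hij1 : (i : ℕ) < j := hij
  have hij2 : (i' : ℕ) < j' := hij'
  constructor
  · exact Fin.ext hmod
  · apply Fin.ext; omega

lemma main_ind {n : ℕ} (u : ℕ → Matrix (Fin n) (Fin n) ℝ) (hu : ∀ k, IsUpperUnip (u k)) :
    ∀ m : ℕ, ∃ φ : ℕ → ℕ, StrictMono φ ∧
      ∃ b v : ℕ → Matrix (Fin n) (Fin n) ℝ,
        (∀ k, IsUpperUnip (b k)) ∧ (∀ k, IsUpperUnip (v k)) ∧
        (∀ k, u (φ k) = b k * v k) ∧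
        Bornology.IsBounded (Set.range b) ∧
        (∀ i j : Fin n, i < j → ((j : ℕ) - i) * n + i < m →
          (∀ k, v k i j = 0) ∨ Tendsto (fun k => |v k i j|) atTop atTop) := by
  intro m
  induction m with
  | zero =>
    refine ⟨id, strictMono_id, fun _ => 1, u, fun _ => unip_one, hu,
      fun k => (one_mul _).symm, ?_, ?_⟩
    · rw [isBounded_iff_forall_norm_le]
      exact ⟨‖(1 : Matrix (Fin n) (Fin n) ℝ)‖, by rintro x ⟨k, rfl⟩; exact le_refl _⟩
    · intro i j _ h; omega
  | succ m ih =>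
    obtain ⟨φ, hφ, b, v, hb, hv, huv, hbdd, hdich⟩ := ih
    by_cases hm : ∃ p : Fin n × Fin n, p.1 < p.2 ∧ ((p.2 : ℕ) - p.1) * n + p.1 = m
    · obtain ⟨⟨i₀, j₀⟩, hij₀', hkey'⟩ := hm
      have hij₀ : i₀ < j₀ := hij₀'
      have hkey : ((j₀ : ℕ) - i₀) * n + i₀ = m := hkey'
      clear hij₀' hkey'
      obtain ⟨ψ, hψ, hcase⟩ := extraction (fun k => v k i₀ j₀)
      rcases hcase with ⟨C, hC⟩ | htend
      · -- bounded case: absorb the (i₀,j₀) entry into b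
        set E : Matrix (Fin n) (Fin n) ℝ := Matrix.single i₀ j₀ 1 with hE
        set c : ℕ → ℝ := fun k => v (ψ k) i₀ j₀ with hc
        have hEE : E * E = 0 :=
          Matrix.single_mul_single_of_ne 1 i₀ j₀ i₀ (Ne.symm (Fin.ne_of_lt hij₀)) 1
        have hinv : ∀ k, (1 + c k • E) * (1 + (-(c k)) • E) = 1 := by
          intro k
          have h1 : (c k • E) * ((-(c k)) • E) = 0 := by
            rw [Matrix.smul_mul, Matrix.mul_smul, hEE, smul_zero, smul_zero]
          rw [add_mul, one_mul, mul_add, mul_one, h1, add_zero, neg_smul]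
          abel
        have hentry : ∀ (k : ℕ) (i j : Fin n), ((1 + (-(c k)) • E) * v (ψ k)) i j
            = v (ψ k) i j + (-(c k)) * (if i = i₀ then v (ψ k) j₀ j else 0) := by
          intro k i j
          rw [Matrix.add_mul, Matrix.one_mul, Matrix.add_apply, Matrix.smul_mul,
            Matrix.smul_apply, smul_eq_mul]
          congr 1
          by_cases h : i = i₀
          · rw [if_pos h, hE]
            subst h
            rw [Matrix.single_mul_apply_same, one_mul]
          · rw [if_neg h, hE, Matrix.single_mul_apply_of_ne 1 i₀ j₀ i j h]
        refine ⟨φ ∘ ψ, hφ.comp hψ,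
          (fun k => b (ψ k) * (1 + c k • E)),
          (fun k => (1 + (-(c k)) • E) * v (ψ k)),
          fun k => unip_mul (hb (ψ k)) (unip_elem i₀ j₀ hij₀ (c k)),
          fun k => unip_mul (unip_elem i₀ j₀ hij₀ (-(c k))) (hv (ψ k)),
          ?_, ?_, ?_⟩
        · intro k
          show u (φ (ψ k)) = (b (ψ k) * (1 + c k • E)) * ((1 + (-(c k)) • E) * v (ψ k))
          rw [huv (ψ k), mul_assoc, ← mul_assoc (1 + c k • E), hinv k, one_mul]
        · rw [isBounded_iff_forall_norm_le] at hbdd ⊢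
          obtain ⟨B, hB⟩ := hbdd
          refine ⟨B * (‖(1 : Matrix (Fin n) (Fin n) ℝ)‖ + C * ‖E‖), ?_⟩
          rintro x ⟨k, rfl⟩
          have hBnn : (0 : ℝ) ≤ B := le_trans (norm_nonneg _) (hB _ ⟨ψ 0, rfl⟩)
          have he : ‖1 + c k • E‖ ≤ ‖(1 : Matrix (Fin n) (Fin n) ℝ)‖ + C * ‖E‖ := by
            calc ‖1 + c k • E‖ ≤ ‖(1 : Matrix (Fin n) (Fin n) ℝ)‖ + ‖c k • E‖ :=
                  norm_add_le _ _
              _ = ‖(1 : Matrix (Fin n) (Fin n) ℝ)‖ + |c k| * ‖E‖ := by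
                  rw [norm_smul, Real.norm_eq_abs]
              _ ≤ _ := by
                  have := mul_le_mul_of_nonneg_right (hC k) (norm_nonneg E)
                  linarith
          calc ‖b (ψ k) * (1 + c k • E)‖ ≤ ‖b (ψ k)‖ * ‖1 + c k • E‖ :=
                Matrix.frobenius_norm_mul _ _
            _ ≤ B * (‖(1 : Matrix (Fin n) (Fin n) ℝ)‖ + C * ‖E‖) :=
                mul_le_mul (hB _ ⟨ψ k, rfl⟩) he (norm_nonneg _) hBnn
        · intro i j hij hlt
          rcases Nat.lt_succ_iff_lt_or_eq.mp hlt with hlt' | heq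
          · -- old pair: entry unchanged
            have hzero : ∀ k : ℕ, (if i = i₀ then v (ψ k) j₀ j else 0) = 0 := by
              intro k
              by_cases h : i = i₀
              · rw [if_pos h]
                rw [h] at hlt' hij
                apply (hv (ψ k)).2
                have hA : ((j : ℕ) - i₀) * n + (i₀ : ℕ) < ((j₀ : ℕ) - i₀) * n + (i₀ : ℕ) := by
                  rw [hkey]; exact hlt'
                have hB2 : ((j : ℕ) - i₀) * n < ((j₀ : ℕ) - i₀) * n :=
                  Nat.lt_of_add_lt_add_right hA
                have hgap : ((j : ℕ) - i₀) < ((j₀ : ℕ) - i₀) :=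
                  lt_of_mul_lt_mul_right hB2 (Nat.zero_le n)
                have h1 : (i₀ : ℕ) < (j : ℕ) := hij
                rw [Fin.lt_def]
                omega
              · rw [if_neg h]
            have heq' : ∀ k : ℕ, ((1 + (-(c k)) • E) * v (ψ k)) i j = v (ψ k) i j := by
              intro k; rw [hentry k i j, hzero k, mul_zero, add_zero]
            rcases hdich i j hij hlt' with hz | ht
            · left
              intro k
              show ((1 + (-(c k)) • E) * v (ψ k)) i j = 0
              rw [heq' k, hz (ψ k)]
            · right
              have hT : Tendsto (fun k => |v (ψ k) i j|) atTop atTop :=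
                ht.comp hψ.tendsto_atTop
              refine hT.congr fun k => ?_
              show |v (ψ k) i j| = |((1 + (-(c k)) • E) * v (ψ k)) i j|
              rw [heq' k]
          · -- new pair (i₀, j₀): entry becomes 0
            obtain ⟨rfl, rfl⟩ := key_inj hij hij₀ (heq.trans hkey.symm)
            left
            intro k
            show ((1 + (-(c k)) • E) * v (ψ k)) i j = 0
            rw [hentry k i j, if_pos rfl, (hv (ψ k)).1 j]
            simp [hc]
      · -- unbounded case
        refine ⟨φ ∘ ψ, hφ.comp hψ, fun k => b (ψ k), fun k => v (ψ k),
          fun k => hb (ψ k), fun k => hv (ψ k), fun k => huv (ψ k),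
          hbdd.subset (by rintro x ⟨k, rfl⟩; exact ⟨ψ k, rfl⟩), ?_⟩
        intro i j hij hlt
        rcases Nat.lt_succ_iff_lt_or_eq.mp hlt with hlt' | heq
        · rcases hdich i j hij hlt' with hz | ht
          · left; intro k; exact hz (ψ k)
          · right; exact ht.comp hψ.tendsto_atTop
        · obtain ⟨rfl, rfl⟩ := key_inj hij hij₀ (heq.trans hkey.symm)
          right; exact htend
    · refine ⟨φ, hφ, b, v, hb, hv, huv, hbdd, ?_⟩
      intro i j hij hlt
      rcases Nat.lt_succ_iff_lt_or_eq.mp hlt with hlt' | heq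
      · exact hdich i j hij hlt'
      · exact absurd ⟨(i, j), hij, heq⟩ hm

/-- **Claim (in the proof of Theorem th11).** Any sequence `{u_k}` in the upper triangular
unipotent group `N` has a subsequence `{u_{i_k}}` which factors as `u_{i_k} = b_k v_k`, where
`{b_k}` is a bounded sequence in `N` and `{v_k}` is a sequence in `N` satisfying the dichotomy
condition: each entry above the diagonal is either identically `0` or diverges to infinity. -/
theorem stmt_19 {n : ℕ} (u : ℕ → Matrix (Fin n) (Fin n) ℝ)
    (hu : ∀ k, IsUpperUnip (u k)) :
    ∃ φ : ℕ → ℕ, StrictMono φ ∧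
      ∃ b v : ℕ → Matrix (Fin n) (Fin n) ℝ,
        (∀ k, IsUpperUnip (b k)) ∧ (∀ k, IsUpperUnip (v k)) ∧
        (∀ k, u (φ k) = b k * v k) ∧
        Bornology.IsBounded (Set.range b) ∧
        (∀ i j : Fin n, i < j →
          (∀ k, v k i j = 0) ∨ Tendsto (fun k => |v k i j|) atTop atTop) := by
  obtain ⟨φ, hφ, b, v, hb, hv, huv, hbdd, hdich⟩ := main_ind u hu (n * n)
  refine ⟨φ, hφ, b, v, hb, hv, huv, hbdd, ?_⟩
  intro i j hij
  apply hdich i j hij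
  have h1 : (j : ℕ) < n := j.isLt
  have h2 : (i : ℕ) < n := i.isLt
  calc ((j : ℕ) - i) * n + (i : ℕ) < ((j : ℕ) - i) * n + n := by omega
    _ = ((j : ℕ) - i + 1) * n := by ring
    _ ≤ n * n := Nat.mul_le_mul_right n (by omega)
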